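/- In any even-visiting closed walk, the origin is visited an odd number of times: if s is a closed walk of length L in which every site x ≠ 0 is visited an even number of times, then the cardinality of {i : Fin (L+1) | s i = 0} is odd. -/
import Mathlib


/-- A walk of length `L`: a function `s : Fin (L+1) → ℤ` with `s 0 = 0` and
unit steps `|s (i+1) - s i| = 1` for all `i < L`. -/
def IsWalk (L : ℕ) (s : Fin (L + 1) → ℤ) : Prop :=
  s 0 = 0 ∧ ∀ i : Fin L, |s i.succ - s i.castSucc| = 1

/-- A closed walk: a walk that ends at the origin. -/
def IsClosedWalk (L : ℕ) (s : Fin (L + 1) → ℤ) : Prop :=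
  IsWalk L s ∧ s (Fin.last L) = 0

/-- The number of visits of the walk `s` to the site `x`. -/
def visits (L : ℕ) (s : Fin (L + 1) → ℤ) (x : ℤ) : ℕ :=
  Fintype.card {i : Fin (L + 1) // s i = x}

/-- A walk is even-visiting if every site different from `0` is visited an
even number of times. -/
def EvenVisiting (L : ℕ) (s : Fin (L + 1) → ℤ) : Prop :=
  ∀ x : ℤ, x ≠ 0 → Even (visits L s x)

/-- The up-crossing count `u(j)`: the number of indices `i < L` with
`s i = j` and `s (i+1) = j + 1`. -/
def upcross (L : ℕ) (s : Fin (L + 1) → ℤ) (j : ℤ) : ℕ :=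
  Fintype.card {i : Fin L // s i.castSucc = j ∧ s i.succ = j + 1}

/-- In any even-visiting closed walk, the origin is visited an odd number of times. -/
theorem even_visiting_origin_odd (L : ℕ) (s : Fin (L + 1) → ℤ)
    (hs : IsClosedWalk L s) (he : EvenVisiting L s) :
    Odd (visits L s 0) := by
  classical
  obtain ⟨⟨h0, hstep⟩, hL⟩ := hs
  -- parity: s k + k is even
  have hpar : ∀ k : ℕ, ∀ hk : k < L + 1, (s ⟨k, hk⟩ + k) % 2 = 0 := by
    intro k
    induction k with
    | zero =>
      intro hk
      simp [h0]
    | succ k ih =>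
      intro hk
      have hk' : k < L + 1 := by omega
      have hkL : k < L := by omega
      have hst : |s (⟨k, hkL⟩ : Fin L).succ - s (⟨k, hkL⟩ : Fin L).castSucc| = 1 :=
        hstep ⟨k, hkL⟩
      have hsucc : (⟨k, hkL⟩ : Fin L).succ = (⟨k + 1, hk⟩ : Fin (L + 1)) := rfl
      have hcast : (⟨k, hkL⟩ : Fin L).castSucc = (⟨k, hk'⟩ : Fin (L + 1)) := rfl
      rw [hsucc, hcast] at hst
      have habs := abs_eq (by norm_num : (0:ℤ) ≤ 1) |>.mp hst
      have := ih hk'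
      push_cast
      push_cast at this
      omega
  have hLeven : (L : ℤ) % 2 = 0 := by
    have := hpar L (by omega)
    have hlast : s (Fin.last L) = s ⟨L, by omega⟩ := rfl
    rw [hlast] at hL
    rw [hL] at this
    simpa using this
  -- counting
  have hvis : ∀ x : ℤ, visits L s x = (Finset.univ.filter (fun i => s i = x)).card := by
    intro x
    simp [visits, Fintype.card_subtype]
  have hsum : ∑ x ∈ Finset.univ.image s, visits L s x = L + 1 := by
    simp_rw [hvis]
    rw [← Finset.card_eq_sum_card_fiberwise
      (fun i _ => Finset.mem_image_of_mem s (Finset.mem_univ i))]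
    simp
  have h0mem : (0 : ℤ) ∈ Finset.univ.image s := by
    refine Finset.mem_image.mpr ⟨0, Finset.mem_univ _, h0⟩
  have hsplit : visits L s 0 + ∑ x ∈ (Finset.univ.image s).erase 0, visits L s x = L + 1 := by
    rw [Finset.add_sum_erase _ _ h0mem, hsum]
  have heven : Even (∑ x ∈ (Finset.univ.image s).erase 0, visits L s x) := by
    apply Finset.even_sum
    intro x hx
    exact he x (Finset.ne_of_mem_erase hx)
  rw [Nat.even_iff] at heven
  rw [Nat.odd_iff]
  omega
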